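/- Let A be a commutative ring, S ⊆ A a multiplicative set, Q an ideal of A with Q ∩ S = ∅, and J an ideal of A with J ∩ S ≠ ∅. If Q is a weakly S-prime ideal of A, then the product ideal J·Q is a weakly S-prime ideal of A. -/

import Mathlib

/-- If Q is weakly S-prime and J ∩ S ≠ ∅, then J·Q is weakly S-prime. -/
theorem stmt_2 {A : Type*} [CommRing A] (S : Set A)
    (hS : ∀ a ∈ S, ∀ b ∈ S, a * b ∈ S) (Q J : Ideal A)
    (hdisj : (Q : Set A) ∩ S = ∅)
    (hJ : ((J : Set A) ∩ S).Nonempty)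
    (hQ : ∃ s ∈ S, ∀ x y : A, x * y ≠ 0 → x * y ∈ Q → s * x ∈ Q ∨ s * y ∈ Q) :
    ((J * Q : Ideal A) : Set A) ∩ S = ∅ ∧
      ∃ s ∈ S, ∀ x y : A, x * y ≠ 0 → x * y ∈ J * Q → s * x ∈ J * Q ∨ s * y ∈ J * Q := by
  obtain ⟨t, htJ, htS⟩ := hJ
  obtain ⟨s, hsS, hs⟩ := hQ
  have hsub : J * Q ≤ Q := Ideal.mul_le_right
  constructor
  · apply Set.eq_empty_of_forall_notMem
    intro x ⟨hx1, hx2⟩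
    exact Set.eq_empty_iff_forall_notMem.mp hdisj x ⟨hsub hx1, hx2⟩
  · refine ⟨s * t, hS s hsS t htS, ?_⟩
    intro x y hne hxy
    rcases hs x y hne (hsub hxy) with h | h
    · left
      have : s * t * x = t * (s * x) := by ring
      rw [this]; exact Ideal.mul_mem_mul htJ h
    · right
      have : s * t * y = t * (s * y) := by ring
      rw [this]; exact Ideal.mul_mem_mul htJ h
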